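/- Let Q be a quantale and γ ∈ Q with γ ≠ ⊤. Suppose there exist a unital quantale M with unit e and a map ι : Q → M which is injective, multiplicative (ι (p * q) = ι p * ι q) and preserves arbitrary suprema, such that every element of M lies in range ι ∪ {e, ⊤_M}, e ∉ range ι, ⊤_M ∉ range ι, {m ∈ M | m ≤ e} \ {e} = {m ∈ M | m ≤ ι γ}, and {m ∈ M | e ≤ m} \ {e} = {⊤_M}. Then Q satisfies: (a) γ * α ⊔ α * γ ≤ α for all α ∈ Q, and (b) for all α ∈ Q and all β ∈ Q with β ≰ γ, ⊤_Q * α ≤ (β * α) ⊔ α and α * ⊤_Q ≤ (α * β) ⊔ α. -/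
import Mathlib


/-- If a quantale `Q` with `γ ≠ ⊤` admits an extension to a unital
quantale `M` by an isolated unit `e` (with `e⁻ = ι γ`, `e⁺ = ⊤`) in which `Q` embeds
as a subquantale, then `Q` satisfies conditions (a) and (b). -/
theorem stmt_12 {Q : Type u} [CompleteLattice Q] (mul : Q → Q → Q)
    (hassoc : ∀ a b c : Q, mul (mul a b) c = mul a (mul b c))
    (hsSup_left : ∀ (A : Set Q) (b : Q), mul (sSup A) b = ⨆ a ∈ A, mul a b)
    (hsSup_right : ∀ (A : Set Q) (b : Q), mul b (sSup A) = ⨆ a ∈ A, mul b a)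
    (γ : Q) (hγ : γ ≠ ⊤)
    {M : Type v} [CompleteLattice M] (mulM : M → M → M) (e : M)
    (hassocM : ∀ a b c : M, mulM (mulM a b) c = mulM a (mulM b c))
    (hsSup_leftM : ∀ (A : Set M) (b : M), mulM (sSup A) b = ⨆ a ∈ A, mulM a b)
    (hsSup_rightM : ∀ (A : Set M) (b : M), mulM b (sSup A) = ⨆ a ∈ A, mulM b a)
    (heM : ∀ m : M, mulM e m = m ∧ mulM m e = m)
    (ι : Q → M) (hinj : Function.Injective ι)
    (hmul : ∀ p q : Q, ι (mul p q) = mulM (ι p) (ι q))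
    (hsup : ∀ A : Set Q, ι (sSup A) = ⨆ a ∈ A, ι a)
    (hcover : ∀ m : M, m ∈ Set.range ι ∨ m = e ∨ m = ⊤)
    (he_notin : e ∉ Set.range ι) (htop_notin : (⊤ : M) ∉ Set.range ι)
    (hdown : {m : M | m ≤ e} \ {e} = {m : M | m ≤ ι γ})
    (hup : {m : M | e ≤ m} \ {e} = {(⊤ : M)}) :
    (∀ α : Q, mul γ α ⊔ mul α γ ≤ α) ∧
    (∀ α β : Q, ¬ β ≤ γ →
      mul ⊤ α ≤ mul β α ⊔ α ∧ mul α ⊤ ≤ mul α β ⊔ α) := by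
  -- ι preserves binary sup
  have hsup2 : ∀ p q : Q, ι (p ⊔ q) = ι p ⊔ ι q := by
    intro p q
    have h := hsup {p, q}
    rw [sSup_pair] at h
    rw [h, iSup_pair]
  -- ι reflects and preserves order
  have hle : ∀ p q : Q, ι p ≤ ι q ↔ p ≤ q := by
    intro p q
    constructor
    · intro h
      have h2 : ι (p ⊔ q) = ι q := by rw [hsup2]; exact sup_eq_right.mpr h
      exact sup_eq_right.mp (hinj h2)
    · intro h
      have h2 : ι (p ⊔ q) = ι q := by rw [sup_eq_right.mpr h]
      rw [hsup2] at h2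
      exact h2 ▸ le_sup_left
  -- mulM distributes over binary sup
  have hmsupL : ∀ a b c : M, mulM (a ⊔ b) c = mulM a c ⊔ mulM b c := by
    intro a b c
    have h := hsSup_leftM {a, b} c
    rw [sSup_pair] at h
    rw [h, iSup_pair]
  have hmsupR : ∀ a b c : M, mulM c (a ⊔ b) = mulM c a ⊔ mulM c b := by
    intro a b c
    have h := hsSup_rightM {a, b} c
    rw [sSup_pair] at h
    rw [h, iSup_pair]
  have hmonoL : ∀ a b c : M, a ≤ b → mulM a c ≤ mulM b c := by
    intro a b c h
    have := hmsupL a b c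
    rw [sup_eq_right.mpr h] at this
    rw [this]; exact le_sup_left
  have hmonoR : ∀ a b c : M, a ≤ b → mulM c a ≤ mulM c b := by
    intro a b c h
    have := hmsupR a b c
    rw [sup_eq_right.mpr h] at this
    rw [this]; exact le_sup_left
  -- ι γ ≤ e
  have hγe : ι γ ≤ e := by
    have : ι γ ∈ {m : M | m ≤ ι γ} := le_refl _
    rw [← hdown] at this
    exact this.1
  constructor
  · intro α
    apply sup_le
    · rw [← hle, hmul]
      calc mulM (ι γ) (ι α) ≤ mulM e (ι α) := hmonoL _ _ _ hγe
        _ = ι α := (heM _).1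
    · rw [← hle, hmul]
      calc mulM (ι α) (ι γ) ≤ mulM (ι α) e := hmonoR _ _ _ hγe
        _ = ι α := (heM _).2
  · intro α β hβ
    have hβe : ¬ ι β ≤ e := by
      intro h
      have hne : ι β ≠ e := fun h' => he_notin ⟨β, h'⟩
      have hm : ι β ∈ {m : M | m ≤ e} \ {e} := ⟨h, hne⟩
      rw [hdown] at hm
      exact hβ ((hle β γ).mp hm)
    have htopβ : e ⊔ ι β = ⊤ := by
      have h2 : e ⊔ ι β ≠ e := fun h => hβe (h ▸ le_sup_right)
      have hm : e ⊔ ι β ∈ {m : M | e ≤ m} \ {e} := ⟨le_sup_left, h2⟩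
      rw [hup] at hm
      exact hm
    constructor
    · rw [← hle, hsup2, hmul, hmul]
      calc mulM (ι ⊤) (ι α) ≤ mulM ⊤ (ι α) := hmonoL _ _ _ le_top
        _ = mulM (e ⊔ ι β) (ι α) := by rw [htopβ]
        _ = mulM e (ι α) ⊔ mulM (ι β) (ι α) := hmsupL _ _ _
        _ = ι α ⊔ mulM (ι β) (ι α) := by rw [(heM _).1]
        _ = mulM (ι β) (ι α) ⊔ ι α := sup_comm _ _
    · rw [← hle, hsup2, hmul, hmul]
      calc mulM (ι α) (ι ⊤) ≤ mulM (ι α) ⊤ := hmonoR _ _ _ le_top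
        _ = mulM (ι α) (e ⊔ ι β) := by rw [htopβ]
        _ = mulM (ι α) e ⊔ mulM (ι α) (ι β) := hmsupR _ _ _
        _ = ι α ⊔ mulM (ι α) (ι β) := by rw [(heM _).2]
        _ = mulM (ι α) (ι β) ⊔ ι α := sup_comm _ _
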